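/- Every vertex (x,y) with 0 ≤ x < r and 0 ≤ y < r in the {r,r+1}-leaper graph on an m×n board (with m ≥ 2r+1, n ≥ 2r+2) has exactly two neighbors, namely (x+r, y+r+1) and (x+r+1, y+r); hence any Hamiltonian circuit must contain both of these edges. -/

import Mathlib

/-- The `{r,s}`-leaper graph on an `m × n` board: vertices are the cells
`(x,y)` with `0 ≤ x < m`, `0 ≤ y < n`, and two cells are adjacent when
their absolute coordinate differences are `{r, s}`. -/
def leaperGraph (r s m n : ℕ) : SimpleGraph (Fin m × Fin n) :=
  SimpleGraph.fromRel fun p q =>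
    (Nat.dist p.1.val q.1.val = r ∧ Nat.dist p.2.val q.2.val = s) ∨
    (Nat.dist p.1.val q.1.val = s ∧ Nat.dist p.2.val q.2.val = r)

/-- In any cycle through `v`, there are two edges at `v` with distinct other
endpoints. -/
lemma cycle_two_edges_at_base {V : Type*} {G : SimpleGraph V} {v : V} {c : G.Walk v v}
    (hc : c.IsCycle) :
    ∃ p q, p ≠ q ∧ s(v, p) ∈ c.edges ∧ s(v, q) ∈ c.edges := by
  cases c with
  | nil => exact absurd rfl hc.ne_nil
  | @cons _ b _ h p =>
    have hlen : 3 ≤ (SimpleGraph.Walk.cons h p).length := hc.three_le_length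
    have hplen : 2 ≤ p.length := by
      simpa [SimpleGraph.Walk.length_cons] using hlen
    have hdne : p.darts ≠ [] := by
      intro hcon
      have := p.length_darts
      rw [hcon] at this
      simp at this
      omega
    set d := p.darts.getLast hdne with hd
    have hdsnd : d.snd = v := by rw [hd, p.getLast_darts_eq_lastDart hdne]; rfl
    have hdmem : d ∈ p.darts := List.getLast_mem hdne
    have hedge : d.edge ∈ p.edges := List.mem_map_of_mem hdmem
    have hedge' : s(v, d.fst) ∈ p.edges := by
      have : d.edge = s(d.fst, d.snd) := rfl
      rw [this, hdsnd, Sym2.eq_swap] at hedge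
      exact hedge
    refine ⟨b, d.fst, ?_, ?_, ?_⟩
    · intro hbd
      have hnodup : ((SimpleGraph.Walk.cons h p).edges).Nodup := hc.isTrail.edges_nodup
      rw [SimpleGraph.Walk.edges_cons] at hnodup
      have heq : s(v, b) = s(v, d.fst) := by rw [hbd]
      exact List.Nodup.notMem hnodup (heq ▸ hedge')
    · simp [SimpleGraph.Walk.edges_cons]
    · rw [SimpleGraph.Walk.edges_cons]
      exact List.mem_cons_of_mem _ hedge'

/-- Every vertex `(x,y)` with `x, y < r` in the `{r,r+1}`-leaper graph on an
`m × n` board (`m ≥ 2r+1`, `n ≥ 2r+2`) has exactly the two neighbors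
`(x+r, y+r+1)` and `(x+r+1, y+r)`; hence any Hamiltonian circuit contains
both corresponding edges. -/
theorem leaper_corner_forced_edges
    (r m n x y : ℕ) (hr : 1 ≤ r) (hx : x < r) (hy : y < r)
    (hm : 2 * r + 1 ≤ m) (hn : 2 * r + 2 ≤ n) :
    let G := leaperGraph r (r + 1) m n
    let v : Fin m × Fin n := (⟨x, by omega⟩, ⟨y, by omega⟩)
    let a : Fin m × Fin n := (⟨x + r, by omega⟩, ⟨y + r + 1, by omega⟩)
    let b : Fin m × Fin n := (⟨x + r + 1, by omega⟩, ⟨y + r, by omega⟩)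
    G.neighborSet v = {a, b} ∧
      ∀ (u : Fin m × Fin n) (w : G.Walk u u), w.IsHamiltonianCycle →
        s(v, a) ∈ w.edges ∧ s(v, b) ∈ w.edges := by
  intro G v a b
  have hNS : G.neighborSet v = {a, b} := by
    ext q
    obtain ⟨⟨q1, hq1⟩, ⟨q2, hq2⟩⟩ := q
    simp only [SimpleGraph.mem_neighborSet, G, v, a, b, leaperGraph,
      SimpleGraph.fromRel_adj, Set.mem_insert_iff, Set.mem_singleton_iff,
      Prod.mk.injEq, Fin.mk.injEq, ne_eq, Nat.dist]
    omega
  refine ⟨hNS, ?_⟩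
  intro u w hw
  have hvsup : v ∈ w.support := hw.mem_support v
  have hc : (w.rotate v hvsup).IsCycle := hw.isCycle.rotate hvsup
  obtain ⟨p, q, hpq, hpe, hqe⟩ := cycle_two_edges_at_base hc
  have hperm := (w.rotate_edges v hvsup).perm
  have hpe' : s(v, p) ∈ w.edges := hperm.mem_iff.mp hpe
  have hqe' : s(v, q) ∈ w.edges := hperm.mem_iff.mp hqe
  have hp : p ∈ G.neighborSet v := w.adj_of_mem_edges hpe'
  have hq : q ∈ G.neighborSet v := w.adj_of_mem_edges hqe'
  rw [hNS] at hp hq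
  rcases hp with rfl | rfl <;> rcases hq with rfl | rfl
  · exact absurd rfl hpq
  · exact ⟨hpe', hqe'⟩
  · exact ⟨hqe', hpe'⟩
  · exact absurd rfl hpq
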